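/- Let P₁,…,P_N be 1-dimensional orthogonal projections on ℂ^d. The projections distinguish all pure states (i.e., for any two distinct pure states ρ₁ ≠ ρ₂ there is some j with tr(P_j ρ₁) ≠ tr(P_j ρ₂)) if and only if every nonzero selfadjoint operator T satisfying tr(P_j T) = 0 for all j and tr(T) = 0 has rank at least 3. -/

import Mathlib

open Matrix

lemma mySpectral {n : Type*} [Fintype n] [DecidableEq n] {A : Matrix n n ℂ} (hA : A.IsHermitian) :
    A = ∑ i, (hA.eigenvalues i : ℂ) •
      vecMulVec ⇑(hA.eigenvectorBasis i) (star ⇑(hA.eigenvectorBasis i)) := by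
  nth_rewrite 1 [hA.spectral_theorem]
  ext k l
  simp [mul_apply, Matrix.sum_apply, vecMulVec_apply, diagonal,
    Matrix.IsHermitian.eigenvectorUnitary_apply, star_apply, Finset.sum_mul, Finset.mul_sum]
  exact Finset.sum_congr rfl fun x _ => by ring

lemma myDot {n : Type*} [Fintype n] [DecidableEq n] {A : Matrix n n ℂ} (hA : A.IsHermitian)
    (i j : n) :
    star ⇑(hA.eigenvectorBasis i) ⬝ᵥ ⇑(hA.eigenvectorBasis j) = if i = j then 1 else 0 := by
  have h := hA.eigenvectorBasis.orthonormal
  rw [orthonormal_iff_ite] at h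
  rw [← h i j, EuclideanSpace.inner_eq_star_dotProduct]
  exact dotProduct_comm _ _

lemma traceVecMulVec {n : Type*} [Fintype n] (v w : n → ℂ) :
    (vecMulVec v w).trace = w ⬝ᵥ v := by
  simp [trace, vecMulVec_apply, dotProduct, mul_comm]

lemma hermVecMulVec {n : Type*} [Fintype n] (v : n → ℂ) :
    (vecMulVec v (star v)).IsHermitian := by
  ext i j
  simp [conjTranspose_apply, vecMulVec_apply, mul_comm]

lemma vmvMulVec {n : Type*} [Fintype n] (v w x : n → ℂ) :
    vecMulVec v w *ᵥ x = (w ⬝ᵥ x) • v := by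
  funext k
  simp [mulVec, vecMulVec_apply, dotProduct, Finset.sum_mul]
  exact Finset.sum_congr rfl fun x _ => by ring


/-- A pure state on `ℂ^d`: a rank-one orthogonal projection `|ψ⟩⟨ψ|` for a unit vector `ψ`. -/
def IsPureState {d : ℕ} (ρ : Matrix (Fin d) (Fin d) ℂ) : Prop :=
  ∃ ψ : Fin d → ℂ, star ψ ⬝ᵥ ψ = 1 ∧ ρ = Matrix.vecMulVec ψ (star ψ)

/-- Rank criterion: one-dimensional projections `P₁,…,P_N` distinguish all pure states iff
every nonzero traceless selfadjoint `T` orthogonal to all the `P j` has rank at least 3. -/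
theorem rank_criterion (d N : ℕ) (P : Fin N → Matrix (Fin d) (Fin d) ℂ)
    (hP : ∀ j, IsPureState (P j)) :
    (∀ ρ₁ ρ₂ : Matrix (Fin d) (Fin d) ℂ, IsPureState ρ₁ → IsPureState ρ₂ → ρ₁ ≠ ρ₂ →
        ∃ j, (P j * ρ₁).trace ≠ (P j * ρ₂).trace) ↔
    (∀ T : Matrix (Fin d) (Fin d) ℂ, T.IsHermitian → T ≠ 0 → T.trace = 0 →
        (∀ j, (P j * T).trace = 0) → 3 ≤ T.rank) := by
  constructor
  · intro hdist T hT hT0 htr hPT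
    by_contra hrank
    push_neg at hrank
    have hspec := mySpectral hT
    classical
    set e := hT.eigenvalues with he
    set s : Finset (Fin d) := Finset.univ.filter (fun i => e i ≠ 0) with hs
    have hcard : s.card < 3 := by
      have h' := hT.rank_eq_card_non_zero_eigs
      rw [Fintype.card_subtype] at h'
      rw [hs, he]
      omega
    have hzero : ∀ i, i ∉ s → e i = 0 := by
      intro i hi
      by_contra h
      exact hi (Finset.mem_filter.mpr ⟨Finset.mem_univ _, h⟩)
    have hs_ne : s.Nonempty := by
      rw [Finset.nonempty_iff_ne_empty]
      intro hemp
      apply hT0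
      rw [hspec]
      refine Finset.sum_eq_zero fun i _ => ?_
      have : e i = 0 := hzero i (by simp [hemp])
      simp [this]
    have hsum_s : T = ∑ i ∈ s, (e i : ℂ) •
        vecMulVec ⇑(hT.eigenvectorBasis i) (star ⇑(hT.eigenvectorBasis i)) := by
      refine hspec.trans ?_
      exact (Finset.sum_subset (Finset.subset_univ s)
        (fun x _ hx => by simp [hzero x hx])).symm
    have htrace : ∑ i ∈ s, (e i : ℂ) = 0 := by
      have : T.trace = ∑ i ∈ s, (e i : ℂ) := by
        rw [hsum_s, trace_sum]
        refine Finset.sum_congr rfl fun i _ => ?_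
        rw [trace_smul, traceVecMulVec, myDot hT i i]
        simp
      rw [← this, htr]
    have h12 : s.card = 1 ∨ s.card = 2 := by
      have := hs_ne.card_pos
      omega
    rcases h12 with h1 | h2
    · obtain ⟨i, hi⟩ := Finset.card_eq_one.mp h1
      have hmem : i ∈ s := by rw [hi]; exact Finset.mem_singleton_self i
      have hei : e i ≠ 0 := (Finset.mem_filter.mp hmem).2
      rw [hi, Finset.sum_singleton] at htrace
      exact hei (by exact_mod_cast htrace)
    · obtain ⟨i, j, hij, hs2⟩ := Finset.card_eq_two.mp h2
      have hi : i ∈ s := by rw [hs2]; exact Finset.mem_insert_self _ _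
      have hj : j ∈ s := by rw [hs2]; simp
      have hei : e i ≠ 0 := (Finset.mem_filter.mp hi).2
      rw [hs2, Finset.sum_pair hij] at htrace hsum_s
      set ρ₁ := vecMulVec ⇑(hT.eigenvectorBasis i) (star ⇑(hT.eigenvectorBasis i)) with hρ₁
      set ρ₂ := vecMulVec ⇑(hT.eigenvectorBasis j) (star ⇑(hT.eigenvectorBasis j)) with hρ₂
      have hpure1 : IsPureState ρ₁ := ⟨_, by rw [myDot hT i i]; simp, rfl⟩
      have hpure2 : IsPureState ρ₂ := ⟨_, by rw [myDot hT j j]; simp, rfl⟩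
      have hne : ρ₁ ≠ ρ₂ := by
        intro h
        have h1 : ρ₁ *ᵥ ⇑(hT.eigenvectorBasis i) = ρ₂ *ᵥ ⇑(hT.eigenvectorBasis i) := by rw [h]
        rw [hρ₁, hρ₂, vmvMulVec, vmvMulVec, myDot hT i i, myDot hT j i,
          if_pos rfl, if_neg (Ne.symm hij), one_smul, zero_smul] at h1
        have := myDot hT i i
        rw [if_pos rfl, h1] at this
        simp at this
      obtain ⟨j₀, hj₀⟩ := hdist ρ₁ ρ₂ hpure1 hpure2 hne
      apply hj₀
      have h0 := hPT j₀
      rw [hsum_s, Matrix.mul_add, Matrix.mul_smul, Matrix.mul_smul, trace_add,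
        trace_smul, trace_smul] at h0
      have hej : (e j : ℂ) = -(e i : ℂ) := by linear_combination htrace
      have hkey : (e i : ℂ) * ((P j₀ * ρ₁).trace - (P j₀ * ρ₂).trace) = 0 := by
        rw [hej] at h0
        simp only [smul_eq_mul] at h0
        linear_combination h0
      have : (e i : ℂ) ≠ 0 := by exact_mod_cast hei
      have := (mul_eq_zero.mp hkey).resolve_left this
      exact sub_eq_zero.mp this
  · intro hrank ρ₁ ρ₂ h1 h2 hne
    by_contra hc
    push_neg at hc
    obtain ⟨ψ₁, hψ₁, rfl⟩ := h1
    obtain ⟨ψ₂, hψ₂, rfl⟩ := h2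
    set T := vecMulVec ψ₁ (star ψ₁) - vecMulVec ψ₂ (star ψ₂) with hT
    have herm : T.IsHermitian := (hermVecMulVec ψ₁).sub (hermVecMulVec ψ₂)
    have tne : T ≠ 0 := sub_ne_zero_of_ne hne
    have ttr : T.trace = 0 := by
      rw [hT, trace_sub, traceVecMulVec, traceVecMulVec, hψ₁, hψ₂, sub_self]
    have tP : ∀ j, (P j * T).trace = 0 := by
      intro j
      rw [hT, Matrix.mul_sub, trace_sub, hc j, sub_self]
    have h3 := hrank T herm tne ttr tP
    set A : Matrix (Fin d) (Fin 2) ℂ :=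
      Matrix.of fun i k => if k = 0 then ψ₁ i else ψ₂ i with hA
    set B : Matrix (Fin 2) (Fin d) ℂ :=
      Matrix.of fun k j => if k = 0 then star ψ₁ j else -(star ψ₂ j) with hB
    have hfac : T = A * B := by
      ext i j
      simp [hT, hA, hB, mul_apply, Fin.sum_univ_two, vecMulVec_apply, Matrix.sub_apply]
      ring
    have hle : T.rank ≤ 2 := by
      rw [hfac]
      refine le_trans (rank_mul_le_left A B) ?_
      simpa using A.rank_le_card_width
    omega
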